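/- Let q be a positive integer, B ⊆ Z/qZ nonempty with |∑_{b∈B} e^{2πi·wb/q}| ≤ δ|B| for all nonzero w, and suppose δ < 1. Then the q vectors ψ(w) ∈ C^B, w ∈ Z/qZ, with ψ(w)_b = (1/√|B|)e^{2πi·wb/q}, are pairwise distinct, and hence q ≤ (1 + √(2/(1−δ)))^(2|B|). -/

import Mathlib

open Metric MeasureTheory Module
open scoped ENNReal

/-- Volume packing bound: `N` points of norm ≤ 1 that are pairwise `2r`-separated
satisfy `N ≤ ((1+r)/r)^dim`. -/
lemma packing_bound {E : Type*} [NormedAddCommGroup E] [NormedSpace ℝ E]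
    [FiniteDimensional ℝ E] {ι : Type*} [Fintype ι] (p : ι → E)
    (hnorm : ∀ i, ‖p i‖ ≤ 1) {r : ℝ} (hr : 0 < r)
    (hsep : ∀ i j, i ≠ j → 2 * r ≤ dist (p i) (p j)) :
    (Fintype.card ι : ℝ) ≤ ((1 + r) / r) ^ (finrank ℝ E) := by
  borelize E
  set μ : Measure E := Measure.addHaar
  set D := finrank ℝ E
  have hsub : (⋃ i, ball (p i) r) ⊆ ball (0 : E) (1 + r) := by
    intro z hz
    simp only [Set.mem_iUnion] at hz
    obtain ⟨i, hi⟩ := hz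
    rw [mem_ball] at hi ⊢
    calc dist z 0 ≤ dist z (p i) + dist (p i) 0 := dist_triangle _ _ _
      _ < r + 1 := by
          have := hnorm i
          rw [dist_zero_right] at *
          linarith
      _ = 1 + r := by ring
  have hmeas : (Fintype.card ι : ℝ≥0∞) * μ (ball (0 : E) r) ≤ μ (ball (0 : E) (1 + r)) := by
    calc (Fintype.card ι : ℝ≥0∞) * μ (ball (0 : E) r)
        = ∑ i : ι, μ (ball (p i) r) := by
          simp [Measure.addHaar_ball_center, Finset.sum_const, nsmul_eq_mul]
      _ = μ (⋃ i, ball (p i) r) := by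
          rw [measure_iUnion (fun i j hij => ball_disjoint_ball (by linarith [hsep i j hij]))
            (fun i => measurableSet_ball), tsum_fintype]
      _ ≤ μ (ball (0 : E) (1 + r)) := measure_mono hsub
  rw [Measure.addHaar_ball_of_pos μ 0 hr, Measure.addHaar_ball_of_pos μ 0 (by linarith : (0:ℝ) < 1 + r)] at hmeas
  have hc0 : μ (ball (0 : E) 1) ≠ 0 := (measure_ball_pos μ 0 one_pos).ne'
  have hctop : μ (ball (0 : E) 1) ≠ ⊤ := measure_ball_lt_top.ne
  rw [← mul_assoc] at hmeas
  have hmeas2 : (Fintype.card ι : ℝ≥0∞) * ENNReal.ofReal (r ^ D) ≤ ENNReal.ofReal ((1 + r) ^ D) :=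
    (ENNReal.mul_le_mul_iff_left hc0 hctop).mp hmeas
  have hrD : (0:ℝ) < r ^ D := pow_pos hr D
  have : (Fintype.card ι : ℝ) * r ^ D ≤ (1 + r) ^ D := by
    have := ENNReal.toReal_mono (by simp) hmeas2
    rw [ENNReal.toReal_mul, ENNReal.toReal_ofReal hrD.le, ENNReal.toReal_ofReal
      (by positivity)] at this
    simpa using this
  rw [div_pow]
  rw [le_div_iff₀ hrD]
  linarith

open Complex Finset

/-- The standard additive character of `ZMod q`: `x ↦ e^{2πi·x/q}`. -/
noncomputable def ch (q : ℕ) (x : ZMod q) : ℂ :=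
  Complex.exp (2 * Real.pi * Complex.I * (x.val : ℂ) / q)

/-- The phase-hash vector `ψ(w) ∈ ℂ^B`, `ψ(w)_b = (1/√|B|)·e^{2πi·wb/q}`. -/
noncomputable def psi (q : ℕ) (B : Finset (ZMod q)) (w : ZMod q) (b : B) : ℂ :=
  (1 / (Real.sqrt B.card : ℂ)) * ch q (w * (b : ZMod q))

section charlemmas
variable {q : ℕ} [NeZero q]

lemma ch_eq_stdAddChar (x : ZMod q) : ch q x = ZMod.stdAddChar x := by
  rw [ZMod.stdAddChar_apply, ZMod.toCircle_apply, ch]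

lemma norm_ch (x : ZMod q) : ‖ch q x‖ = 1 := by
  rw [ch_eq_stdAddChar, ZMod.stdAddChar_apply]
  exact Circle.norm_coe _

lemma conj_ch_mul (x y : ZMod q) :
    (starRingEnd ℂ) (ch q x) * ch q y = ch q (y - x) := by
  simp only [ch_eq_stdAddChar, ZMod.stdAddChar_apply]
  rw [← Circle.coe_inv_eq_conj, ← AddChar.map_neg_eq_inv, ← Circle.coe_mul,
    ← AddChar.map_add_eq_mul, sub_eq_add_neg, add_comm]

end charlemmas

open Module

theorem stmt_12 (q : ℕ) (hq : 0 < q) (B : Finset (ZMod q)) (hB : B.Nonempty)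
    (δ : ℝ) (hδ : δ < 1)
    (hgood : ∀ w : ZMod q, w ≠ 0 → ‖∑ b ∈ B, ch q (w * b)‖ ≤ δ * B.card) :
    Function.Injective (psi q B) ∧
    (q : ℝ) ≤ (1 + Real.sqrt (2 / (1 - δ))) ^ (2 * B.card) := by
  haveI : NeZero q := ⟨hq.ne'⟩
  have hn0 : 0 < B.card := hB.card_pos
  have hn0' : (0:ℝ) < B.card := by exact_mod_cast hn0
  set p : ZMod q → EuclideanSpace ℂ ↥B := fun w => (WithLp.equiv 2 (↥B → ℂ)).symm (psi q B w)
    with hp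
  have hsq : (Real.sqrt B.card : ℂ) * (Real.sqrt B.card : ℂ) = (B.card : ℂ) := by
    rw [← Complex.ofReal_mul, Real.mul_self_sqrt (Nat.cast_nonneg _)]
    norm_cast
  have hc : (starRingEnd ℂ) ((1 : ℂ) / (Real.sqrt B.card : ℂ)) = 1 / (Real.sqrt B.card : ℂ) := by
    simp [Complex.conj_ofReal]
  have key : ∀ (w w' : ZMod q) (b : ↥B), (starRingEnd ℂ) (psi q B w b) * psi q B w' b
      = (1 / (B.card : ℂ)) * ch q ((w' - w) * (b : ZMod q)) := by
    intro w w' b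
    rw [psi, psi, map_mul, hc, mul_mul_mul_comm, conj_ch_mul,
      show w' * (b : ZMod q) - w * (b : ZMod q) = (w' - w) * (b : ZMod q) by ring,
      div_mul_div_comm, one_mul, hsq]
  have hinner : ∀ w w' : ZMod q,
      (inner ℂ (p w) (p w') : ℂ) = (1 / (B.card : ℂ)) * ∑ b ∈ B, ch q ((w' - w) * b) := by
    intro w w'
    rw [PiLp.inner_apply]
    calc ∑ b : ↥B, (inner ℂ (p w b) (p w' b) : ℂ)
        = ∑ b : ↥B, (1 / (B.card : ℂ)) * ch q ((w' - w) * (b : ZMod q)) :=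
          Finset.sum_congr rfl (fun b _ => (RCLike.inner_apply' _ _).trans (key w w' b))
      _ = (1 / (B.card : ℂ)) * ∑ b : ↥B, ch q ((w' - w) * (b : ZMod q)) := by
          rw [Finset.mul_sum]
      _ = (1 / (B.card : ℂ)) * ∑ b ∈ B, ch q ((w' - w) * b) := by
          rw [Finset.sum_coe_sort B (fun b => ch q ((w' - w) * b))]
  have hnorm1 : ∀ w : ZMod q, ‖p w‖ = 1 := by
    intro w
    have h1 : (inner ℂ (p w) (p w) : ℂ) = 1 := by
      rw [hinner w w, sub_self]
      have h0 : ∀ b ∈ B, ch q ((0 : ZMod q) * b) = 1 := by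
        intro b _
        rw [zero_mul, ch]
        simp
      rw [Finset.sum_congr rfl h0, Finset.sum_const, nsmul_eq_mul, mul_one,
        one_div, inv_mul_cancel₀]
      exact_mod_cast hn0'.ne'
    have h3 : ‖p w‖ ^ 2 = 1 := by
      rw [@norm_sq_eq_re_inner ℂ, h1]
      simp
    nlinarith [norm_nonneg (p w)]
  have hsep2 : ∀ w w' : ZMod q, w ≠ w' → 2 - 2 * δ ≤ ‖p w - p w'‖ ^ 2 := by
    intro w w' hne
    have hu : w' - w ≠ 0 := sub_ne_zero_of_ne (Ne.symm hne)
    have hre : Complex.re (inner ℂ (p w) (p w') : ℂ) ≤ δ := by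
      calc Complex.re (inner ℂ (p w) (p w') : ℂ) ≤ ‖(inner ℂ (p w) (p w') : ℂ)‖ :=
            Complex.re_le_norm _
        _ ≤ δ := by
            rw [hinner w w', norm_mul]
            have hh : ‖(1 / (B.card : ℂ))‖ = 1 / (B.card : ℝ) := by
              simp
            rw [hh, div_mul_eq_mul_div, one_mul, div_le_iff₀ hn0']
            exact hgood (w' - w) hu
    have hns := @norm_sub_sq ℂ _ _ _ _ (p w) (p w')
    rw [hnorm1 w, hnorm1 w'] at hns
    simp only [RCLike.re_to_complex] at hns
    rw [hns]
    nlinarith [hre]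
  have hinj : Function.Injective (psi q B) := by
    intro w w' h
    by_contra hne
    have hpeq : p w = p w' := by rw [hp]; simp only [h]
    have h5 := hsep2 w w' hne
    rw [hpeq, sub_self, norm_zero] at h5
    nlinarith
  refine ⟨hinj, ?_⟩
  set s := Real.sqrt (2 / (1 - δ)) with hs
  have h1δ : (0:ℝ) < 1 - δ := by linarith
  have hspos : 0 < s := Real.sqrt_pos.mpr (by positivity)
  have hs2 : s ^ 2 = 2 / (1 - δ) := Real.sq_sqrt (by positivity)
  set r := 1 / s with hr
  have hrpos : 0 < r := by positivity
  have hsep : ∀ w w' : ZMod q, w ≠ w' → 2 * r ≤ dist (p w) (p w') := by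
    intro w w' hne
    rw [dist_eq_norm]
    have h2 := hsep2 w w' hne
    have hrr : (2 * r) ^ 2 = 2 - 2 * δ := by
      have h4 : (2 - 2 * δ) * s ^ 2 = 4 := by
        rw [hs2]
        field_simp
        ring
      rw [hr]
      field_simp
      linarith [h4]
    have h4 : (2 * r) ^ 2 ≤ ‖p w - p w'‖ ^ 2 := by rw [hrr]; exact h2
    nlinarith [norm_nonneg (p w - p w'), hrpos]
  have hpack := packing_bound p (fun w => le_of_eq (hnorm1 w)) hrpos hsep
  rw [ZMod.card q] at hpack
  have hdim : finrank ℝ (EuclideanSpace ℂ ↥B) = 2 * B.card := by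
    have h1 : finrank ℝ ℂ * finrank ℂ (EuclideanSpace ℂ ↥B) = finrank ℝ (EuclideanSpace ℂ ↥B) :=
      finrank_mul_finrank ℝ ℂ (EuclideanSpace ℂ ↥B)
    rw [← h1, Complex.finrank_real_complex, finrank_euclideanSpace, Fintype.card_coe]
  rw [hdim] at hpack
  have hratio : (1 + r) / r = 1 + s := by
    rw [hr]
    field_simp
    ring
  rw [hratio] at hpack
  exact hpack
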